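/- Let (W,S) be a Coxeter system with exactly one bad 5-edge. Let D be a gross separator of S with head A, let F be the set of all good foci of D, let B₁,…,B_k be the bad separators of S with head A, and let F_i be the set of good foci of B_i. Then F = F₁ ∪ ⋯ ∪ F_k, the sets F₁,…,F_k are pairwise disjoint, and for i ≠ j no element of F_i is adjacent in Γ(W,S) to an element of F_j. -/

import Mathlib

/-- A simple graph is *chordal* if every cycle of length at least four has a chord,
that is, an edge of the graph joining two vertices of the cycle that is not an
edge of the cycle. -/
def SimpleGraph.IsChordal {V : Type*} (G : SimpleGraph V) : Prop :=
  ∀ ⦃v : V⦄ (w : G.Walk v v), w.IsCycle → 4 ≤ w.length →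
    ∃ a b, a ∈ w.support ∧ b ∈ w.support ∧ G.Adj a b ∧ s(a, b) ∉ w.edges

/-- `B` is a `(c,f)`-separator of `G`: `c, f ∉ B` and `c` and `f` lie in different
connected components of the induced subgraph `G − B`. -/
def SimpleGraph.IsSeparator {V : Type*} (G : SimpleGraph V) (c f : V) (Bs : Set V) : Prop :=
  ∃ (hc : c ∈ Bsᶜ) (hf : f ∈ Bsᶜ), ¬ (G.induce Bsᶜ).Reachable ⟨c, hc⟩ ⟨f, hf⟩

/-- `B` is a minimal `(c,f)`-separator: no proper subset of `B` is a `(c,f)`-separator. -/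
def SimpleGraph.IsMinSeparator {V : Type*} (G : SimpleGraph V) (c f : V) (Bs : Set V) : Prop :=
  G.IsSeparator c f Bs ∧ ∀ Bs' ⊂ Bs, ¬ G.IsSeparator c f Bs'

/-- `u` and `g` lie in the same connected component of `G − B`. -/
def SimpleGraph.InSepComp {V : Type*} (G : SimpleGraph V) (Bs : Set V) (u g : V) : Prop :=
  ∃ (hu : u ∈ Bsᶜ) (hg : g ∈ Bsᶜ), (G.induce Bsᶜ).Reachable ⟨u, hu⟩ ⟨g, hg⟩

namespace CoxeterMatrix

variable {B : Type*}

/-- The underlying graph of the presentation diagram of a Coxeter matrix: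
vertices are the indices, and `s, t` are adjacent when `m(s,t) < ∞`
(`0` encodes `∞`). -/
def pDiagram (M : CoxeterMatrix B) : SimpleGraph B where
  Adj s t := s ≠ t ∧ M s t ≠ 0
  symm := ⟨by intro s t h; exact ⟨h.1.symm, by rw [M.symmetric]; exact h.2⟩⟩
  loopless := ⟨by intro s h; exact h.1 rfl⟩

/-- The underlying graph of the Coxeter diagram induced on a subset `A`:
`s, t ∈ A` are adjacent when `m(s,t) > 2` (including `m(s,t) = ∞`, encoded by `0`). -/
def cDiagramOn (M : CoxeterMatrix B) (A : Set B) : SimpleGraph A where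
  Adj s t := (s : B) ≠ (t : B) ∧ M s t ≠ 2
  symm := ⟨by intro s t h; exact ⟨h.1.symm, by rw [M.symmetric]; exact h.2⟩⟩
  loopless := ⟨by intro s h; exact h.1 rfl⟩

/-- A *simplex*: a subset whose elements pairwise satisfy `m(s,t) < ∞`. -/
def IsSimplex (M : CoxeterMatrix B) (A : Set B) : Prop :=
  A.Pairwise fun s t => M s t ≠ 0

/-- A subset is *irreducible* if its Coxeter diagram is connected. -/
def IsIrreducible (M : CoxeterMatrix B) (A : Set B) : Prop :=
  (M.cDiagramOn A).Connected

def IsIrredSimplex (M : CoxeterMatrix B) (A : Set B) : Prop :=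
  M.IsSimplex A ∧ M.IsIrreducible A

/-- A maximal irreducible simplex. -/
def IsMaxIrredSimplex (M : CoxeterMatrix B) (A : Set B) : Prop :=
  M.IsIrredSimplex A ∧ ∀ A' : Set B, A ⊂ A' → ¬ M.IsIrredSimplex A'

/-- `A^⊥ = {s : m(s,a) = 2 for all a ∈ A}`. -/
def perp (M : CoxeterMatrix B) (A : Set B) : Set B :=
  {s | ∀ a ∈ A, M s a = 2}

/-- Type `G₃` (= `H₃`): labels `3, 5` on a path, other label `2`. -/
def IsTypeG3 (M : CoxeterMatrix B) (A : Set B) : Prop :=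
  ∃ a b c : B, A = {a, b, c} ∧ M a b = 3 ∧ M b c = 5 ∧ M a c = 2

/-- Type `G₄` (= `H₄`): labels `3, 3, 5` on a path, other labels `2`. -/
def IsTypeG4 (M : CoxeterMatrix B) (A : Set B) : Prop :=
  ∃ a b c d : B, A = {a, b, c, d} ∧ M a b = 3 ∧ M b c = 3 ∧ M c d = 5 ∧
    M a c = 2 ∧ M a d = 2 ∧ M b d = 2

/-- A set of *bad edges*: a symmetric set of pairs `{a,b}` with `m(a,b) ≥ 5` such that
every irreducible simplex properly containing `{a,b}` is of type `G₃` or `G₄`. -/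
def IsBadEdgeSet (M : CoxeterMatrix B) (E : B → B → Prop) : Prop :=
  (∀ a b, E a b → E b a) ∧
  (∀ a b, E a b → M a b = 0 ∨ 5 ≤ M a b) ∧
  (∀ a b, E a b → ∀ A : Set B, M.IsIrredSimplex A → ({a, b} : Set B) ⊂ A →
    M.IsTypeG3 A ∨ M.IsTypeG4 A)

/-- A *bad* irreducible simplex: an irreducible simplex containing a bad edge. -/
def IsBadSimplex (M : CoxeterMatrix B) (E : B → B → Prop) (A : Set B) : Prop :=
  M.IsIrredSimplex A ∧ ∃ a ∈ A, ∃ b ∈ A, E a b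

/-- A *bad separator*: a subset `Bs` containing a pair of eyes `a, b` with `m(a,b) = 2`,
with a bad focus `c ∉ Bs` making `{a,b,c}` a bad maximal irreducible simplex,
`Bs ⊆ {a,b} ∪ {a,b,c}^⊥`, and with a good focus `f ∉ Bs` making `Bs` a minimal
`(c,f)`-separator of the presentation diagram. -/
def IsBadSeparator (M : CoxeterMatrix B) (E : B → B → Prop) (Bs : Set B) : Prop :=
  ∃ a b c : B, a ∈ Bs ∧ b ∈ Bs ∧ M a b = 2 ∧ c ∉ Bs ∧
    M.IsMaxIrredSimplex {a, b, c} ∧ M.IsBadSimplex E {a, b, c} ∧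
    Bs ⊆ {a, b} ∪ M.perp {a, b, c} ∧
    ∃ f, f ∉ Bs ∧ M.pDiagram.IsMinSeparator c f Bs

/-- `{x, y}` is a bad 5-edge: `m(x,y) = 5` and every irreducible simplex
properly containing `{x,y}` is of type `G₃` or `G₄`. -/
def IsBad5Edge (M : CoxeterMatrix B) (x y : B) : Prop :=
  x ≠ y ∧ M x y = 5 ∧ ∀ A : Set B, M.IsIrredSimplex A → ({x, y} : Set B) ⊂ A →
    M.IsTypeG3 A ∨ M.IsTypeG4 A

/-- The bad-edge set consisting of the single unordered pair `{x, y}`. -/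
def singleEdge (x y : B) : B → B → Prop :=
  fun u v => (u = x ∧ v = y) ∨ (u = y ∧ v = x)

end CoxeterMatrix

/-- `Bs` is a bad separator of `S` with head `{a,b,c}` and eyes `{a,b}`
(the head conditions `m(a,b) = 2`, maximality, irreducibility and badness
are carried separately). -/
def CoxeterMatrix.IsBadSepWithHead {B : Type*} (M : CoxeterMatrix B)
    (a b c : B) (Bs : Set B) : Prop :=
  a ∈ Bs ∧ b ∈ Bs ∧ c ∉ Bs ∧ Bs ⊆ ({a, b} : Set B) ∪ M.perp {a, b, c} ∧
    ∃ f, f ∉ Bs ∧ M.pDiagram.IsMinSeparator c f Bs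

/-- The set of good foci of a bad separator `Bs` with head `{a,b,c}`. -/
def CoxeterMatrix.badFoci {B : Type*} (M : CoxeterMatrix B)
    (c : B) (Bs : Set B) : Set B :=
  {f | f ∉ Bs ∧ M.pDiagram.IsMinSeparator c f Bs}

namespace SepAux

variable {V : Type*} (G : SimpleGraph V)

/-- There is a walk from `u` to `v` in `G` all of whose vertices avoid `s`. -/
def ReachOut (s : Set V) (u v : V) : Prop :=
  ∃ w : G.Walk u v, ∀ x ∈ w.support, x ∉ s

variable {G}

lemma ReachOut.left_notMem {s : Set V} {u v : V} (h : ReachOut G s u v) : u ∉ s :=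
  h.choose_spec u h.choose.start_mem_support

lemma ReachOut.right_notMem {s : Set V} {u v : V} (h : ReachOut G s u v) : v ∉ s :=
  h.choose_spec v h.choose.end_mem_support

lemma ReachOut.mono {s t : Set V} {u v : V} (hst : s ⊆ t) (h : ReachOut G t u v) :
    ReachOut G s u v := by
  obtain ⟨w, hw⟩ := h
  exact ⟨w, fun x hx hxs => hw x hx (hst hxs)⟩

lemma ReachOut.refl {s : Set V} {u : V} (hu : u ∉ s) : ReachOut G s u u := by
  refine ⟨SimpleGraph.Walk.nil, fun x hx => ?_⟩
  simp only [SimpleGraph.Walk.support_nil, List.mem_singleton] at hx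
  subst hx; exact hu

lemma ReachOut.symm {s : Set V} {u v : V} (h : ReachOut G s u v) : ReachOut G s v u := by
  obtain ⟨w, hw⟩ := h
  refine ⟨w.reverse, fun x hx => hw x ?_⟩
  rwa [SimpleGraph.Walk.support_reverse, List.mem_reverse] at hx

lemma ReachOut.trans {s : Set V} {u v x : V} (h : ReachOut G s u v) (h' : ReachOut G s v x) :
    ReachOut G s u x := by
  obtain ⟨w, hw⟩ := h
  obtain ⟨w', hw'⟩ := h'
  refine ⟨w.append w', fun z hz => ?_⟩
  rw [SimpleGraph.Walk.mem_support_append_iff] at hz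
  rcases hz with hz | hz
  · exact hw z hz
  · exact hw' z hz

lemma reachOut_of_adj {s : Set V} {u v : V} (hu : u ∉ s) (hv : v ∉ s) (h : G.Adj u v) :
    ReachOut G s u v := by
  refine ⟨SimpleGraph.Walk.cons h SimpleGraph.Walk.nil, fun x hx => ?_⟩
  simp only [SimpleGraph.Walk.support_cons, SimpleGraph.Walk.support_nil, List.mem_cons,
    List.mem_singleton, List.not_mem_nil, or_false] at hx
  rcases hx with rfl | rfl
  · exact hu
  · exact hv

/-- Split a `ReachOut` walk at a vertex on its support. -/
lemma reachOut_split [DecidableEq V] {s : Set V} {u v x : V}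
    (w : G.Walk u v) (hw : ∀ z ∈ w.support, z ∉ s) (hx : x ∈ w.support) :
    ReachOut G s u x ∧ ReachOut G s x v :=
  ⟨⟨w.takeUntil x hx, fun z hz => hw z (w.support_takeUntil_subset hx hz)⟩,
   ⟨w.dropUntil x hx, fun z hz => hw z (w.support_dropUntil_subset hx hz)⟩⟩

lemma toInduceReachable {s : Set V} : ∀ {u v : V} (w : G.Walk u v),
    (∀ x ∈ w.support, x ∉ s) → ∀ (hu : u ∈ sᶜ) (hv : v ∈ sᶜ),
    (G.induce sᶜ).Reachable ⟨u, hu⟩ ⟨v, hv⟩ := by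
  intro u v w
  induction w with
  | nil => intro _ hu hv; exact SimpleGraph.Reachable.refl _
  | @cons a b d hadj w ih =>
      intro hw hu hv
      have hb : b ∈ sᶜ := hw b (by simp)
      have h1 : (G.induce sᶜ).Adj ⟨a, hu⟩ ⟨b, hb⟩ := hadj
      exact (SimpleGraph.Adj.reachable h1).trans
        (ih (fun x hx => hw x (by simp [hx])) hb hv)

lemma isSeparator_iff {s : Set V} {c f : V} :
    G.IsSeparator c f s ↔ c ∉ s ∧ f ∉ s ∧ ¬ ReachOut G s c f := by
  constructor
  · rintro ⟨hc, hf, hr⟩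
    exact ⟨hc, hf, fun ⟨w, hw⟩ => hr (toInduceReachable w hw hc hf)⟩
  · rintro ⟨hc, hf, hr⟩
    refine ⟨hc, hf, fun hreach => hr ?_⟩
    obtain ⟨w⟩ := hreach
    refine ⟨w.map (SimpleGraph.Embedding.induce sᶜ).toHom, ?_⟩
    intro x hx
    replace hx : x ∈ (w.map (SimpleGraph.Embedding.induce sᶜ).toHom).support := hx
    rw [SimpleGraph.Walk.support_map, List.mem_map] at hx
    obtain ⟨⟨y, hy⟩, _, rfl⟩ := hx
    exact hy

lemma isSeparator_mono {s t : Set V} {c f : V} (hst : s ⊆ t) (hc : c ∉ t) (hf : f ∉ t)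
    (h : G.IsSeparator c f s) : G.IsSeparator c f t := by
  rw [isSeparator_iff] at h ⊢
  exact ⟨hc, hf, fun hr => h.2.2 (hr.mono hst)⟩

private lemma tailAux [DecidableEq V] {a f : V} (r : G.Walk a f) (hne : a ≠ f)
    (hcnt : r.support.count a = 1) :
    ∃ (u : V) (r' : G.Walk u f), G.Adj a u ∧ ∀ z ∈ r'.support, z ∈ r.support ∧ z ≠ a := by
  cases r with
  | nil => exact absurd rfl hne
  | @cons _ u _ hadj r' =>
      have hna : a ∉ r'.support := by
        rw [SimpleGraph.Walk.support_cons, List.count_cons_self] at hcnt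
        have : r'.support.count a = 0 := by omega
        exact List.count_eq_zero.1 this
      refine ⟨u, r', hadj, fun z hz => ⟨by simp [hz], fun hza => hna (hza ▸ hz)⟩⟩

/-- If there is a walk from `c` to `f` avoiding `s \ {a}` but none avoiding `s`,
then `a` has a neighbor `u` with a walk from `u` to `f` avoiding `s`. -/
lemma exists_adj_reachOut [DecidableEq V] {s : Set V} {c f a : V}
    (hnr : ¬ ReachOut G s c f) (hr : ReachOut G (s \ {a}) c f) (ha : a ∈ s) (hf : f ∉ s) :
    ∃ u, G.Adj a u ∧ ReachOut G s u f := by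
  obtain ⟨w, hw⟩ := hr
  have haw : a ∈ w.support := by
    by_contra haw
    exact hnr ⟨w, fun x hx hxs => hw x hx ⟨hxs, fun hxa => haw (by
      simp only [Set.mem_singleton_iff] at hxa; exact hxa ▸ hx)⟩⟩
  have haw' : a ∈ w.reverse.support := by
    rwa [SimpleGraph.Walk.support_reverse, List.mem_reverse]
  have hcnt : ((w.reverse.takeUntil a haw').reverse).support.count a = 1 := by
    rw [SimpleGraph.Walk.support_reverse, List.count_reverse]
    exact w.reverse.count_support_takeUntil_eq_one haw'
  have hne : a ≠ f := fun h => hf (h ▸ ha)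
  obtain ⟨u, r', hadj, hr'⟩ := tailAux ((w.reverse.takeUntil a haw').reverse) hne hcnt
  refine ⟨u, hadj, r', fun z hz => ?_⟩
  obtain ⟨hz1, hz2⟩ := hr' z hz
  rw [SimpleGraph.Walk.support_reverse, List.mem_reverse] at hz1
  have hzw : z ∈ w.support := by
    have := w.reverse.support_takeUntil_subset haw' hz1
    rwa [SimpleGraph.Walk.support_reverse, List.mem_reverse] at this
  intro hzs
  exact (hw z hzw) ⟨hzs, hz2⟩

/-- Every element of a minimal `(c,f)`-separator has a neighbor from which `f`
can be reached avoiding the separator. -/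
lemma minSep_exists_adj [DecidableEq V] {s : Set V} {c f a : V}
    (h : G.IsMinSeparator c f s) (ha : a ∈ s) :
    ∃ u, G.Adj a u ∧ ReachOut G s u f := by
  obtain ⟨hsep, hmin⟩ := h
  rw [isSeparator_iff] at hsep
  obtain ⟨hc, hf, hnr⟩ := hsep
  have hnot := hmin (s \ {a}) (Set.sdiff_singleton_ssubset.2 ha)
  rw [isSeparator_iff] at hnot
  push_neg at hnot
  have hr : ReachOut G (s \ {a}) c f :=
    hnot (fun h => hc h.1) (fun h => hf h.1)
  exact exists_adj_reachOut hnr hr ha hf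

lemma chain_aux {α : Type*} {ch : Set (Set α)} (hch : IsChain (· ⊆ ·) ch)
    (hne : ch.Nonempty) (l : List α) (hl : ∀ x ∈ l, x ∉ ⋂₀ ch) :
    ∃ s ∈ ch, ∀ x ∈ l, x ∉ s := by
  induction l with
  | nil => exact ⟨hne.choose, hne.choose_spec, by simp⟩
  | cons x xs ih =>
      obtain ⟨s, hs, hxs⟩ := ih (fun y hy => hl y (by simp [hy]))
      have hx : x ∉ ⋂₀ ch := hl x (by simp)
      rw [Set.mem_sInter] at hx
      push_neg at hx
      obtain ⟨t, ht, hxt⟩ := hx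
      rcases eq_or_ne s t with rfl | hst
      · exact ⟨s, hs, fun y hy => by
          rcases List.mem_cons.1 hy with rfl | hy
          · exact hxt
          · exact hxs y hy⟩
      rcases hch hs ht hst with h | h
      · refine ⟨s, hs, fun y hy => ?_⟩
        rcases List.mem_cons.1 hy with rfl | hy
        · exact fun hys => hxt (h hys)
        · exact hxs y hy
      · refine ⟨t, ht, fun y hy => ?_⟩
        rcases List.mem_cons.1 hy with rfl | hy
        · exact hxt
        · exact fun hyt => hxs y hy (h hyt)

end SepAux


/-- **Lemma 5.9.** Let `(W,S)` be a Coxeter system with exactly one bad 5-edge. Let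
`D = {a,b} ∪ A^⊥` be a gross separator with head `A = {a,b,c}`, let `F` be the set
of good foci of `D`, and for each bad separator `Bs` with head `A` let `F_Bs` be its
set of good foci. Then `F` is the union of the `F_Bs`, the `F_Bs` are pairwise
disjoint, and no element of `F_Bs` is adjacent in `Γ(W,S)` to an element of `F_Bs'`
for `Bs ≠ Bs'`. -/
theorem grossFoci_eq_union_badFoci {B : Type*} (M : CoxeterMatrix B)
    (x y : B) (hxy : M.IsBad5Edge x y) (a b c : B) (hab : M a b = 2)
    (hA : M.IsMaxIrredSimplex {a, b, c})
    (hbad : M.IsBadSimplex (CoxeterMatrix.singleEdge x y) {a, b, c})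
    (hc : c ∉ ({a, b} : Set B) ∪ M.perp {a, b, c})
    (hgross : ∃ f, f ∉ ({a, b} : Set B) ∪ M.perp {a, b, c} ∧
      M.pDiagram.IsSeparator c f (({a, b} : Set B) ∪ M.perp {a, b, c}) ∧
      ¬ M.pDiagram.IsSeparator c f ((({a, b} : Set B) ∪ M.perp {a, b, c}) \ {a}) ∧
      ¬ M.pDiagram.IsSeparator c f ((({a, b} : Set B) ∪ M.perp {a, b, c}) \ {b})) :
    ({f | f ∉ ({a, b} : Set B) ∪ M.perp {a, b, c} ∧
        M.pDiagram.IsSeparator c f (({a, b} : Set B) ∪ M.perp {a, b, c}) ∧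
        ¬ M.pDiagram.IsSeparator c f ((({a, b} : Set B) ∪ M.perp {a, b, c}) \ {a}) ∧
        ¬ M.pDiagram.IsSeparator c f ((({a, b} : Set B) ∪ M.perp {a, b, c}) \ {b})} =
      ⋃ Bs ∈ {Bs : Set B | M.IsBadSepWithHead a b c Bs}, M.badFoci c Bs) ∧
    (∀ Bs Bs' : Set B, M.IsBadSepWithHead a b c Bs → M.IsBadSepWithHead a b c Bs' →
      Bs ≠ Bs' → Disjoint (M.badFoci c Bs) (M.badFoci c Bs')) ∧
    (∀ Bs Bs' : Set B, M.IsBadSepWithHead a b c Bs → M.IsBadSepWithHead a b c Bs' →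
      Bs ≠ Bs' → ∀ f ∈ M.badFoci c Bs, ∀ g ∈ M.badFoci c Bs',
        ¬ M.pDiagram.Adj f g) := by
  
  classical
  open SepAux in
  set G := M.pDiagram with hG
  set D := (({a, b} : Set B) ∪ M.perp {a, b, c}) with hD
  have haD : a ∈ D := Set.mem_union_left _ (by simp)
  have hbD : b ∈ D := Set.mem_union_left _ (by simp)
  have hsimp : M.IsSimplex {a, b, c} := hA.1.1
  -- `c` is adjacent to every vertex of `D`
  have hadjD : ∀ v ∈ D, G.Adj c v := by
    rintro v (hv | hv)
    · have hcv : c ≠ v := fun h => hc (h ▸ Set.mem_union_left _ hv)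
      have : M c v ≠ 0 := hsimp (by simp) (by
        rcases hv with rfl | hv
        · simp
        · simp only [Set.mem_singleton_iff] at hv; subst hv; simp) hcv
      exact ⟨hcv, this⟩
    · have h2 : M v c = 2 := hv c (by simp)
      have hcv : c ≠ v := by
        rintro rfl
        rw [M.diagonal] at h2
        omega
      exact ⟨hcv, by rw [M.symmetric, h2]; exact two_ne_zero⟩
  -- the key structural facts about a bad separator with head `{a,b,c}` and good focus `f`
  have key : ∀ Bs f, M.IsBadSepWithHead a b c Bs → f ∈ M.badFoci c Bs →
      f ∉ D ∧ G.IsSeparator c f D ∧ (∀ e ∈ Bs, ¬ G.IsSeparator c f (D \ {e})) ∧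
        Bs = {v | v ∈ D ∧ ∃ u, G.Adj v u ∧ ReachOut G D u f} := by
    intro Bs f hBs hf
    obtain ⟨haBs, hbBs, hcBs, hsub, -⟩ := hBs
    obtain ⟨hfBs, hmin⟩ := hf
    have hsep := hmin.1
    rw [isSeparator_iff] at hsep
    obtain ⟨hcBs', hfBs', hnr⟩ := hsep
    have hfD : f ∉ D := by
      rintro (hf2 | hf2)
      · rcases hf2 with rfl | hf2
        · exact hfBs haBs
        · simp only [Set.mem_singleton_iff] at hf2; subst hf2; exact hfBs hbBs
      · exact hnr (reachOut_of_adj hcBs hfBs (hadjD f (Set.mem_union_right _ hf2)))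
    have hDc : ∀ v, v ∈ D → v ∉ Bs → ReachOut G Bs c v := fun v hv hvBs =>
      reachOut_of_adj hcBs hvBs (hadjD v hv)
    have hBD : ∀ u, ReachOut G Bs u f → ReachOut G D u f := by
      rintro u ⟨w, hw⟩
      refine ⟨w, fun z hz hzD => ?_⟩
      exact hnr ((hDc z hzD (hw z hz)).trans (reachOut_split w hw hz).2)
    have hsepD : G.IsSeparator c f D := isSeparator_mono hsub hc hfD hmin.1
    refine ⟨hfD, hsepD, ?_, ?_⟩
    · intro e heBs hsepE
      obtain ⟨u, hadj_eu, hruf⟩ := minSep_exists_adj hmin heBs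
      have hruD := hBD u hruf
      have heD := hsub heBs
      rw [isSeparator_iff] at hsepE
      refine hsepE.2.2 ?_
      have h1 : ReachOut G (D \ {e}) c e :=
        reachOut_of_adj (fun h => hc h.1) (by simp) (hadjD e heD)
      have h2 : ReachOut G (D \ {e}) e u :=
        reachOut_of_adj (by simp) (fun h => hruD.left_notMem h.1) hadj_eu
      have h3 : ReachOut G (D \ {e}) u f := hruD.mono Set.diff_subset
      exact (h1.trans h2).trans h3
    · ext v
      simp only [Set.mem_setOf_eq]
      constructor
      · intro hv
        obtain ⟨u, h1, h2⟩ := minSep_exists_adj hmin hv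
        exact ⟨hsub hv, u, h1, hBD u h2⟩
      · rintro ⟨hvD, u, hvu, hru⟩
        by_contra hvBs
        have h1 := hDc v hvD hvBs
        have h2 : ReachOut G Bs v u :=
          reachOut_of_adj hvBs (fun h => hru.left_notMem (hsub h)) hvu
        have h3 : ReachOut G Bs u f := hru.mono hsub
        exact hnr ((h1.trans h2).trans h3)
  refine ⟨?_, ?_, ?_⟩
  · -- F = union of the bad foci
    ext f
    simp only [Set.mem_setOf_eq, Set.mem_iUnion]
    constructor
    · rintro ⟨hfD, hsepDf, hnsa, hnsb⟩
      -- find a minimal separator inside `D` by Zorn's lemma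
      set S : Set (Set B) := {s | s ⊆ D ∧ G.IsSeparator c f s} with hS
      have hDS : D ∈ S := ⟨Set.Subset.rfl, hsepDf⟩
      have hchain : ∀ ch ⊆ S, IsChain (· ⊆ ·) ch → ch.Nonempty →
          ∃ lb ∈ S, ∀ s ∈ ch, lb ⊆ s := by
        intro ch hchS hch hchne
        refine ⟨⋂₀ ch, ⟨?_, ?_⟩, fun s hs => Set.sInter_subset_of_mem hs⟩
        · obtain ⟨s0, hs0⟩ := hchne
          exact (Set.sInter_subset_of_mem hs0).trans (hchS hs0).1
        · obtain ⟨s0, hs0⟩ := hchne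
          have hsep0 := (hchS hs0).2
          rw [isSeparator_iff] at hsep0
          rw [isSeparator_iff]
          refine ⟨fun h => hsep0.1 (h s0 hs0), fun h => hsep0.2.1 (h s0 hs0), ?_⟩
          rintro ⟨w, hw⟩
          obtain ⟨s, hsch, hws⟩ := chain_aux hch ⟨s0, hs0⟩ w.support hw
          have hseps := (hchS hsch).2
          rw [isSeparator_iff] at hseps
          exact hseps.2.2 ⟨w, hws⟩
      obtain ⟨m, hmD, hminm⟩ := zorn_superset_nonempty S hchain D hDS
      obtain ⟨hmsub, hmsep⟩ := hminm.1
      have hminSep : G.IsMinSeparator c f m := by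
        refine ⟨hmsep, fun s hss hsepS => ?_⟩
        exact hss.2 (hminm.2 ⟨hss.1.trans hmsub, hsepS⟩ hss.1)
      have hcm : c ∉ m := fun h => hc (hmsub h)
      have hfm : f ∉ m := fun h => hfD (hmsub h)
      have haM : a ∈ m := by
        by_contra ham
        have hsub' : m ⊆ D \ {a} := fun x hx =>
          ⟨hmsub hx, fun h => ham (Set.mem_singleton_iff.1 h ▸ hx)⟩
        exact hnsa (isSeparator_mono hsub' (fun h => hc h.1) (fun h => hfD h.1) hmsep)
      have hbM : b ∈ m := by
        by_contra hbm
        have hsub' : m ⊆ D \ {b} := fun x hx =>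
          ⟨hmsub hx, fun h => hbm (Set.mem_singleton_iff.1 h ▸ hx)⟩
        exact hnsb (isSeparator_mono hsub' (fun h => hc h.1) (fun h => hfD h.1) hmsep)
      refine ⟨m, ?_, ?_⟩
      · show M.IsBadSepWithHead a b c m
        exact ⟨haM, hbM, hcm, hmsub, f, hfm, hminSep⟩
      · show f ∉ m ∧ G.IsMinSeparator c f m
        exact ⟨hfm, hminSep⟩
    · rintro ⟨Bs, hBs, hf⟩
      obtain ⟨hfD, hsepDf, hdel, -⟩ := key Bs f hBs hf
      exact ⟨hfD, hsepDf, hdel a hBs.1, hdel b hBs.2.1⟩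
  · -- the foci sets are pairwise disjoint
    intro Bs Bs' h1 h2 hne
    rw [Set.disjoint_left]
    intro f hf1 hf2
    exact hne (((key Bs f h1 hf1).2.2.2).trans ((key Bs' f h2 hf2).2.2.2).symm)
  · -- no adjacency between foci of distinct bad separators
    intro Bs Bs' h1 h2 hne f hf g hg hadj
    obtain ⟨hfD, -, -, hBsEq⟩ := key Bs f h1 hf
    obtain ⟨hgD, -, -, hBs'Eq⟩ := key Bs' g h2 hg
    apply hne
    rw [hBsEq, hBs'Eq]
    have hfg : ReachOut G D f g := reachOut_of_adj hfD hgD hadj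
    ext v
    simp only [Set.mem_setOf_eq]
    constructor
    · rintro ⟨hvD, u, h1', h2'⟩
      exact ⟨hvD, u, h1', h2'.trans hfg⟩
    · rintro ⟨hvD, u, h1', h2'⟩
      exact ⟨hvD, u, h1', h2'.trans hfg.symm⟩
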